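/- For all integers n, m, ℓ₁, ℓ₂ with 0 ≤ m ≤ ⌊n/2⌋, 0 ≤ ℓ₁, ℓ₂ ≤ n−2m, and ℓ₁ ≠ ℓ₂: Σ_{i=0}^{n−2m} T_{m,n}^{(ℓ₁)}(i) · T_{m,n}^{(ℓ₂)}(i) · C(n−2m,i)/C(n,m+i) = 0. -/

import Mathlib

open Finset

attribute [local instance] Classical.propDecidable

/-- Stationary distribution of the binary Burnside process. -/
noncomputable def piDist (n : ℕ) (U : Finset ℕ) : ℝ :=
  1 / ((n + 1) * (n.choose U.card))

/-- Binary Burnside transition matrix entry. -/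
noncomputable def Kmat (n : ℕ) (x y : Finset ℕ) : ℝ :=
  (((2 * (n - (x ∪ y).card)).choose (n - (x ∪ y).card) : ℝ) *
      ((2 * ((y \ x).card)).choose ((y \ x).card)) *
      ((2 * ((x \ y).card)).choose ((x \ y).card)) *
      ((2 * ((x ∩ y).card)).choose ((x ∩ y).card))) /
    (4 ^ n * (((n - (x ∪ y).card) + (y \ x).card).choose (n - (x ∪ y).card)) *
      (((x \ y).card + (x ∩ y).card).choose ((x \ y).card)))

/-- Action of K_n on functions. -/
noncomputable def Kop (n : ℕ) (f : Finset ℕ → ℝ) : Finset ℕ → ℝ :=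
  fun x => ∑ y ∈ (Finset.Icc 1 n).powerset, Kmat n x y * f y

/-- s-step transition probabilities. -/
noncomputable def Kpow (n : ℕ) : ℕ → Finset ℕ → Finset ℕ → ℝ
  | 0 => fun x y => if x = y then 1 else 0
  | s + 1 => fun x y => ∑ z ∈ (Finset.Icc 1 n).powerset, Kmat n x z * Kpow n s z y

/-- Chi-square distance to stationarity after s steps, started at x. -/
noncomputable def chiSq (n s : ℕ) (x : Finset ℕ) : ℝ :=
  ∑ y ∈ (Finset.Icc 1 n).powerset, (Kpow n s x y - piDist n y) ^ 2 / piDist n y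

/-- Eigenvalues. -/
noncomputable def betaEV (k : ℕ) : ℝ := (((2 * k).choose k : ℝ)) ^ 2 / 16 ^ k

/-- The eigenvectors f_S of Diaconis–Lin–Ram. -/
noncomputable def fSvec (S : Finset ℕ) : Finset ℕ → ℝ :=
  fun U => (-1 : ℝ) ^ ((S ∩ U).card) * (S.card.choose ((S ∩ U).card))

/-- Inner product with respect to π. -/
noncomputable def innerPi (n : ℕ) (f g : Finset ℕ → ℝ) : ℝ :=
  ∑ U ∈ (Finset.Icc 1 n).powerset, f U * g U * piDist n U

/-- The scalars T_{m,n}^{(ℓ)}(i). -/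
noncomputable def Tcoef (n m ℓ i : ℕ) : ℝ :=
  ∑ j ∈ Finset.range (i + 1),
    if j ≤ ℓ then
      (-1 : ℝ) ^ (m + j) * ((2 * m + ℓ).choose (m + j)) * (i.choose j) *
        ((n - 2 * m - i).choose (ℓ - j))
    else 0

/-- The vector g_T^{m,i} associated to the column reading tableau. -/
noncomputable def gT (n m i : ℕ) : Finset ℕ → ℝ := fun U =>
  if (∀ r ∈ Finset.Icc 1 m, ((2 * r - 1 ∈ U) ↔ ¬(2 * r ∈ U))) ∧
      (U ∩ Finset.Icc (2 * m + 1) n).card = i then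
    (-1 : ℝ) ^ ((U ∩ (Finset.range m).image (fun r => 2 * r + 1)).card)
  else 0

/-- The vector f_T^{m,ℓ} associated to the column reading tableau. -/
noncomputable def fT (n m ℓ : ℕ) : Finset ℕ → ℝ :=
  fun U => ∑ i ∈ Finset.range (n - 2 * m + 1), Tcoef n m ℓ i * gT n m i U

/-- Action of the adjacent transposition s_t (switching t and t+1) on functions. -/
noncomputable def sOp (t : ℕ) (f : Finset ℕ → ℝ) : Finset ℕ → ℝ :=
  fun U => f (U.image (Equiv.swap t (t + 1)))

/-- The factor s_t − 1/(t − 2r + 2) (r is the 1-indexed position in the second row). -/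
noncomputable def tauFactor (r t : ℕ) (f : Finset ℕ → ℝ) : Finset ℕ → ℝ :=
  fun U => sOp t f U - ((t : ℝ) - 2 * r + 2)⁻¹ * f U

/-- Composition (s_{2r+k-1} − ⋯)⋯(s_{2r} − 1/2) of k successive factors. -/
noncomputable def tauComp (r : ℕ) : ℕ → (Finset ℕ → ℝ) → (Finset ℕ → ℝ)
  | 0 => id
  | k + 1 => fun f => tauFactor r (2 * r + k) (tauComp r k f)

/-- τ_Q^{(r)} τ_Q^{(r+1)} ⋯ for the remaining second-row entries. -/
noncomputable def tauQAux : ℕ → List ℕ → (Finset ℕ → ℝ) → (Finset ℕ → ℝ)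
  | _, [] => id
  | r, a :: rest => fun f => tauComp r (a - 2 * r) (tauQAux (r + 1) rest f)

/-- The operator τ_Q for a tableau Q encoded by its list of second-row entries. -/
noncomputable def tauQ (Q : List ℕ) : (Finset ℕ → ℝ) → (Finset ℕ → ℝ) := tauQAux 1 Q

/-- A standard Young tableau of shape (n − Q.length, Q.length), encoded by the strictly
increasing list of second-row entries, each entry a_r satisfying 2r ≤ a_r ≤ n. -/
def IsSYT (n : ℕ) (Q : List ℕ) : Prop :=
  Q.Chain' (· < ·) ∧ (∀ x ∈ Q, x ≤ n) ∧ ∀ r < Q.length, 2 * (r + 1) ≤ Q.getD r 0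

/-- The eigenvectors f_Q^{m,ℓ} (here m = Q.length). -/
noncomputable def fQvec (n : ℕ) (Q : List ℕ) (ℓ : ℕ) : Finset ℕ → ℝ :=
  tauQ Q (fT n Q.length ℓ)

/-- The orthogonal vectors g_Q^{m,i} (here m = Q.length). -/
noncomputable def gQvec (n : ℕ) (Q : List ℕ) (i : ℕ) : Finset ℕ → ℝ :=
  tauQ Q (gT n Q.length i)

/-- The constant γ_Q. -/
noncomputable def gammaQ (Q : List ℕ) : ℝ :=
  ∏ r ∈ Finset.range Q.length, ∏ c ∈ Finset.Icc 2 (Q.getD r 0 - 2 * (r + 1) + 1),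
    ((c : ℝ) ^ 2 - 1) / (c : ℝ) ^ 2

/-- The Murphy (Jucys–Murphy) operator M_r acting on functions. -/
noncomputable def murphy (r : ℕ) (f : Finset ℕ → ℝ) : Finset ℕ → ℝ :=
  fun U => ∑ i ∈ Finset.Icc 1 (r - 1), f (U.image (Equiv.swap i r))

/-- The state space as a finite type. -/
noncomputable def transpEndo (n a b : ℕ) :
    Module.End ℝ ((↥((Finset.Icc 1 n).powerset)) → ℝ) where
  toFun f U := f (if h : U.1.image (Equiv.swap a b) ∈ (Finset.Icc 1 n).powerset
    then ⟨U.1.image (Equiv.swap a b), h⟩ else U)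
  map_add' f g := rfl
  map_smul' c f := rfl

noncomputable def murphyEndo (n r : ℕ) :
    Module.End ℝ ((↥((Finset.Icc 1 n).powerset)) → ℝ) :=
  ∑ i ∈ Finset.Icc 1 (r - 1), transpEndo n i r

noncomputable def KEndo (n : ℕ) :
    Module.End ℝ ((↥((Finset.Icc 1 n).powerset)) → ℝ) where
  toFun f x := ∑ y : ↥((Finset.Icc 1 n).powerset), Kmat n x.1 y.1 * f y
  map_add' f g := by funext x; simp [mul_add, Finset.sum_add_distrib]
  map_smul' c f := by funext x; simp [Finset.mul_sum, mul_left_comm]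


/-- Alternating sum of binomials against a lower-degree binomial polynomial vanishes. -/
lemma altsum_choose_poly : ∀ (A b c : ℕ), c < A →
    ∑ k ∈ range (A + 1), (-1 : ℝ) ^ k * (A.choose k) * ((k + b).choose c) = 0 := by
  intro A
  induction A with
  | zero => intro b c hc; omega
  | succ A ih =>
    intro b c hc
    have key : ∑ k ∈ range (A + 2), (-1 : ℝ) ^ k * ((A+1).choose k) * ((k + b).choose c)
        = ∑ k ∈ range (A + 1), (-1 : ℝ) ^ k * (A.choose k) *
            (((k + b).choose c : ℝ) - ((k + 1 + b).choose c : ℝ)) := by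
      have h1 : ∑ k ∈ range (A + 2), (-1 : ℝ) ^ k * ((A+1).choose k) * ((k + b).choose c)
          = ((b).choose c : ℝ) + ∑ k ∈ range (A + 1),
              (-1 : ℝ) ^ (k+1) * ((A+1).choose (k+1)) * ((k + 1 + b).choose c) := by
        rw [Finset.sum_range_succ' (fun k => (-1 : ℝ) ^ k * ((A+1).choose k) * ((k + b).choose c)) (A+1)]
        simp [Nat.choose_zero_right]
        ring
      have h2 : ∑ k ∈ range (A + 1), (-1 : ℝ) ^ (k+1) * ((A+1).choose (k+1)) * ((k + 1 + b).choose c)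
          = -∑ k ∈ range (A + 1), (-1 : ℝ) ^ k * (A.choose k) * ((k + 1 + b).choose c)
            - ∑ k ∈ range (A + 1), (-1 : ℝ) ^ k * (A.choose (k+1)) * ((k + 1 + b).choose c) := by
        rw [← Finset.sum_neg_distrib, ← Finset.sum_sub_distrib]
        refine Finset.sum_congr rfl fun k _ => ?_
        rw [Nat.choose_succ_succ]
        push_cast
        ring
      have h3 : ∑ k ∈ range (A + 1), (-1 : ℝ) ^ k * (A.choose (k+1)) * ((k + 1 + b).choose c)
          = -∑ k ∈ range (A + 1), (-1 : ℝ) ^ (k+1) * (A.choose (k+1)) * ((k + 1 + b).choose c) := by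
        rw [← Finset.sum_neg_distrib]
        refine Finset.sum_congr rfl fun k _ => ?_
        ring
      have h4 : ∑ k ∈ range (A + 1), (-1 : ℝ) ^ (k+1) * (A.choose (k+1)) * ((k + 1 + b).choose c)
          = ∑ k ∈ range (A + 2), (-1 : ℝ) ^ k * (A.choose k) * ((k + b).choose c)
            - ((b).choose c : ℝ) := by
        rw [Finset.sum_range_succ' (fun k => (-1 : ℝ) ^ k * (A.choose k) * ((k + b).choose c)) (A+1)]
        simp [Nat.choose_zero_right]
      have h5 : ∑ k ∈ range (A + 2), (-1 : ℝ) ^ k * (A.choose k) * ((k + b).choose c)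
          = ∑ k ∈ range (A + 1), (-1 : ℝ) ^ k * (A.choose k) * ((k + b).choose c) := by
        rw [Finset.sum_range_succ, Nat.choose_succ_self]
        simp
      have h6 : ∑ k ∈ range (A + 1), (-1 : ℝ) ^ k * (A.choose k) *
            (((k + b).choose c : ℝ) - ((k + 1 + b).choose c : ℝ))
          = ∑ k ∈ range (A + 1), (-1 : ℝ) ^ k * (A.choose k) * ((k + b).choose c)
            - ∑ k ∈ range (A + 1), (-1 : ℝ) ^ k * (A.choose k) * ((k + 1 + b).choose c) := by
        rw [← Finset.sum_sub_distrib]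
        exact Finset.sum_congr rfl fun k _ => by ring
      rw [h1, h2, h3, h4, h5, h6]
      ring
    rw [key]
    rcases Nat.eq_zero_or_pos c with hc0 | hcpos
    · subst hc0
      simp
    · obtain ⟨c', rfl⟩ : ∃ c', c = c' + 1 := ⟨c - 1, by omega⟩
      have hp : ∀ k : ℕ, ((k + 1 + b).choose (c'+1) : ℝ) = ((k+b).choose c') + ((k+b).choose (c'+1)) := by
        intro k
        have h : k + 1 + b = (k + b) + 1 := by ring
        rw [h, Nat.choose_succ_succ']
        push_cast; ring
      calc ∑ k ∈ range (A + 1), (-1 : ℝ) ^ k * (A.choose k) *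
              (((k + b).choose (c'+1) : ℝ) - ((k + 1 + b).choose (c'+1) : ℝ))
          = -∑ k ∈ range (A + 1), (-1 : ℝ) ^ k * (A.choose k) * ((k + b).choose c') := by
            rw [← Finset.sum_neg_distrib]
            refine Finset.sum_congr rfl fun k _ => ?_
            rw [hp k]; ring
        _ = 0 := by rw [ih b c' (by omega)]; ring

lemma alt_range_choose (a : ℕ) :
    ∑ e ∈ range (a + 1), (-1 : ℝ) ^ e * (a.choose e) = if a = 0 then 1 else 0 := by
  have := @Int.alternating_sum_range_choose a
  have h2 : ((∑ m ∈ range (a + 1), ((-1) ^ m * a.choose m : ℤ) : ℤ) : ℝ)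
      = ∑ e ∈ range (a + 1), (-1 : ℝ) ^ e * (a.choose e) := by
    push_cast
    rfl
  rw [← h2, this]
  split <;> simp

lemma delta_sum (i t M : ℕ) (hi : i ≤ M) :
    ∑ d ∈ range (M + 1), (-1 : ℝ) ^ (d - t) * (i.choose d) * (d.choose t)
      = if t = i then 1 else 0 := by
  have hzero : ∀ d ∈ range (M + 1), d ∉ Finset.Ico t (i + 1) →
      (-1 : ℝ) ^ (d - t) * (i.choose d) * (d.choose t) = 0 := by
    intro d hd hnot
    rw [mem_Ico] at hnot
    push_neg at hnot
    rcases lt_or_ge d t with h | h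
    · simp [Nat.choose_eq_zero_of_lt h]
    · have h2 : i < d := by omega
      simp [Nat.choose_eq_zero_of_lt h2]
  have hsubset : Finset.Ico t (i + 1) ⊆ range (M + 1) := by
    intro x hx
    rw [mem_Ico] at hx
    exact mem_range.2 (by omega)
  rw [← Finset.sum_subset hsubset hzero]
  rcases le_or_gt t i with ht | ht
  · rw [Finset.sum_Ico_eq_sum_range]
    have hn : i + 1 - t = (i - t) + 1 := by omega
    rw [hn]
    have hcong : ∀ e ∈ range ((i - t) + 1),
        (-1 : ℝ) ^ (t + e - t) * (i.choose (t + e)) * ((t + e).choose t)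
        = (i.choose t) * ((-1 : ℝ) ^ e * ((i - t).choose e)) := by
      intro e he
      rw [mem_range] at he
      have h1 : t + e - t = e := by omega
      have h2 : (i.choose (t + e)) * ((t + e).choose t) = (i.choose t) * ((i - t).choose e) := by
        have := Nat.choose_mul (n := i) (k := t + e) (s := t) (by omega)
        simpa [Nat.add_sub_cancel_left] using this
      have h2' : ((i.choose (t + e) : ℝ)) * ((t + e).choose t)
          = (i.choose t : ℝ) * ((i - t).choose e) := by exact_mod_cast h2
      rw [h1, mul_assoc, h2']
      ring
    rw [Finset.sum_congr rfl hcong, ← Finset.mul_sum, alt_range_choose]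
    rcases eq_or_lt_of_le ht with rfl | hlt
    · simp
    · have h3 : i - t ≠ 0 := by omega
      simp [h3, Nat.ne_of_lt hlt]
  · rw [Finset.Ico_eq_empty (by omega : ¬ t < i + 1)]
    rw [Finset.sum_empty, if_neg (by omega : ¬ t = i)]

/-- Newton's forward-difference expansion, with padded range. -/
lemma newton_expansion (f : ℕ → ℝ) (M i : ℕ) (hi : i ≤ M) :
    f i = ∑ d ∈ range (M + 1), (i.choose d : ℝ) *
      ∑ t ∈ range (d + 1), (-1 : ℝ) ^ (d - t) * (d.choose t) * f t := by
  have step1 : ∀ d ∈ range (M + 1),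
      (i.choose d : ℝ) * ∑ t ∈ range (d + 1), (-1 : ℝ) ^ (d - t) * (d.choose t) * f t
      = ∑ t ∈ range (M + 1), (-1 : ℝ) ^ (d - t) * (i.choose d) * (d.choose t) * f t := by
    intro d hd
    rw [mem_range] at hd
    rw [Finset.mul_sum]
    rw [← Finset.sum_subset (Finset.range_subset_range.2 (by omega : d + 1 ≤ M + 1))]
    · exact Finset.sum_congr rfl fun t _ => by ring
    · intro t ht hnot
      rw [mem_range] at ht hnot
      push_neg at hnot
      have : d < t := by omega
      simp [Nat.choose_eq_zero_of_lt this]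
  rw [Finset.sum_congr rfl step1, Finset.sum_comm]
  have step2 : ∀ t ∈ range (M + 1),
      ∑ d ∈ range (M + 1), (-1 : ℝ) ^ (d - t) * (i.choose d) * (d.choose t) * f t
      = (if t = i then 1 else 0) * f t := by
    intro t _
    rw [← delta_sum i t M hi, Finset.sum_mul]
  rw [Finset.sum_congr rfl step2]
  simp [ite_mul, Nat.lt_succ_iff, hi]

/-- C(i,s)·C(m+i,m) = C(m+i,m+s)·C(m+s,m). -/
lemma chooseA (m i s : ℕ) :
    i.choose s * (m + i).choose m = (m + i).choose (m + s) * (m + s).choose m := by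
  rcases le_or_gt s i with h | h
  · have := Nat.choose_mul (n := m + i) (k := m + s) (s := m) (by omega)
    rw [Nat.add_sub_cancel_left, Nat.add_sub_cancel_left] at this
    rw [this]
    ring
  · rw [Nat.choose_eq_zero_of_lt h, Nat.choose_eq_zero_of_lt (by omega : m + i < m + s)]
    ring

/-- C(2m+ℓ,m+k)·C(m+ℓ−k,m) = C(2m+ℓ,m)·C(m+ℓ,m+k) for k ≤ ℓ. -/
lemma chooseB (m ℓ k : ℕ) (hk : k ≤ ℓ) :
    (2 * m + ℓ).choose (m + k) * (m + ℓ - k).choose m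
      = (2 * m + ℓ).choose m * (m + ℓ).choose (m + k) := by
  have h1 : (2 * m + ℓ).choose (m + k) = (2 * m + ℓ).choose (m + ℓ - k) :=
    Nat.choose_symm_of_eq_add (by omega)
  have h2 := Nat.choose_mul (n := 2 * m + ℓ) (k := m + ℓ - k) (s := m) (by omega)
  have h3 : 2 * m + ℓ - m = m + ℓ := by omega
  have h4 : m + ℓ - k - m = ℓ - k := by omega
  rw [h3, h4] at h2
  have h5 : (m + ℓ).choose (ℓ - k) = (m + ℓ).choose (m + k) :=
    Nat.choose_symm_of_eq_add (by omega)
  rw [h1, h2, h5]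

/-- Expansion of a product of two binomials over the same top. -/
lemma choose_mul_choose_expand (i d k : ℕ) :
    i.choose d * i.choose k
      = ∑ t ∈ range (k + 1), d.choose (k - t) * ((d + t).choose d * i.choose (d + t)) := by
  rcases le_or_gt d i with h | h
  · have hv : i.choose k = ∑ t ∈ range (k + 1), (i - d).choose t * d.choose (k - t) := by
      have h0 : i = (i - d) + d := by omega
      calc i.choose k = ((i - d) + d).choose k := by rw [← h0]
        _ = ∑ ij ∈ Finset.HasAntidiagonal.antidiagonal k, (i - d).choose ij.1 * d.choose ij.2 :=
            Nat.add_choose_eq (i - d) d k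
        _ = ∑ t ∈ range (k + 1), (i - d).choose t * d.choose (k - t) := by
            rw [Finset.Nat.sum_antidiagonal_eq_sum_range_succ_mk]
    rw [hv, Finset.mul_sum]
    refine Finset.sum_congr rfl fun t _ => ?_
    rcases le_or_gt (d + t) i with h2 | h2
    · have h3 := Nat.choose_mul (n := i) (k := d + t) (s := d) (by omega)
      rw [Nat.add_sub_cancel_left] at h3
      have h4 : (d + t).choose d * i.choose (d + t) = i.choose d * (i - d).choose t := by
        rw [mul_comm, h3]
      rw [h4]; ring
    · rw [Nat.choose_eq_zero_of_lt h2, Nat.choose_eq_zero_of_lt (by omega : i - d < t)]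
      ring
  · rw [Nat.choose_eq_zero_of_lt h]
    have hz : ∀ t ∈ range (k + 1), d.choose (k - t) * ((d + t).choose d * i.choose (d + t)) = 0 := by
      intro t _
      rw [Nat.choose_eq_zero_of_lt (by omega : i < d + t)]
      ring
    rw [Finset.sum_congr rfl hz]
    simp

/-- ∑_{x≤M} C(x,r)·C(M−x,s) = C(M+1, r+s+1). -/
lemma sum_choose_mul_choose_sub : ∀ (s M r : ℕ),
    ∑ x ∈ range (M + 1), x.choose r * (M - x).choose s = (M + 1).choose (r + s + 1) := by
  intro s
  induction s with
  | zero =>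
    intro M r
    simp only [Nat.choose_zero_right, mul_one]
    rcases le_or_gt r M with h | h
    · have hsub : Finset.Icc r M ⊆ range (M + 1) := by
        intro x hx; rw [Finset.mem_Icc] at hx; exact mem_range.2 (by omega)
      have hz : ∀ x ∈ range (M + 1), x ∉ Finset.Icc r M → x.choose r = 0 := by
        intro x hx hnot
        rw [mem_range] at hx; rw [Finset.mem_Icc] at hnot; push_neg at hnot
        exact Nat.choose_eq_zero_of_lt (by omega)
      rw [← Finset.sum_subset hsub hz, Nat.sum_Icc_choose]
    · have h1 : ∀ x ∈ range (M + 1), x.choose r = 0 := by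
        intro x hx; rw [mem_range] at hx
        exact Nat.choose_eq_zero_of_lt (by omega)
      rw [Finset.sum_congr rfl h1, Nat.choose_eq_zero_of_lt (by omega)]
      simp
  | succ s ih =>
    intro M r
    induction M with
    | zero =>
      rw [Finset.sum_range_one, Nat.choose_eq_zero_of_lt (by omega : 1 < r + (s + 1) + 1)]
      simp
    | succ M ihM =>
      rw [Finset.sum_range_succ]
      have h0 : (M + 1 - (M + 1)).choose (s + 1) = 0 := by simp
      rw [h0, Nat.mul_zero, Nat.add_zero]
      have h1 : ∀ x ∈ range (M + 1), x.choose r * (M + 1 - x).choose (s + 1)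
          = x.choose r * (M - x).choose s + x.choose r * (M - x).choose (s + 1) := by
        intro x hx
        rw [mem_range] at hx
        have h2 : M + 1 - x = (M - x) + 1 := by omega
        rw [h2, Nat.choose_succ_succ']
        ring
      rw [Finset.sum_congr rfl h1, Finset.sum_add_distrib, ih M r, ihM]
      rw [show r + (s + 1) + 1 = (r + s + 1) + 1 from by ring]
      exact (Nat.choose_succ_succ' (M + 1) (r + s + 1)).symm

/-- Full-range Vandermonde with offsets. -/
lemma sum_choose_vandermonde (m N r s : ℕ) (hr : m ≤ r) (hs : m ≤ s) :
    ∑ i ∈ range (N + 1), (m + i).choose r * (m + N - i).choose s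
      = (2 * m + N + 1).choose (r + s + 1) := by
  have key := sum_choose_mul_choose_sub s (2 * m + N) r
  rw [← key]
  have hzero : ∀ x ∈ range (2 * m + N + 1), x ∉ Finset.Ico m (m + N + 1) →
      x.choose r * (2 * m + N - x).choose s = 0 := by
    intro x hx hnot
    rw [mem_range] at hx
    rw [Finset.mem_Ico] at hnot
    push_neg at hnot
    rcases lt_or_ge x m with h | h
    · rw [Nat.choose_eq_zero_of_lt (by omega : x < r)]; ring
    · rw [Nat.choose_eq_zero_of_lt (by omega : 2 * m + N - x < s)]; ring
  have hsub : Finset.Ico m (m + N + 1) ⊆ range (2 * m + N + 1) := by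
    intro x hx; rw [Finset.mem_Ico] at hx; exact mem_range.2 (by omega)
  rw [← Finset.sum_subset hsub hzero, Finset.sum_Ico_eq_sum_range]
  have hn : m + N + 1 - m = N + 1 := by omega
  rw [hn]
  refine Finset.sum_congr rfl fun i hi => ?_
  rw [mem_range] at hi
  congr 2
  omega

lemma inner_alt_zero (N d ℓ j : ℕ) (hj : j ≤ ℓ) (hl : ℓ < d) (hd : d ≤ N) :
    ∑ t ∈ range (d + 1), (-1 : ℝ) ^ (d - t) * (d.choose t) * ((t.choose j : ℝ) *
      ((N - t).choose (ℓ - j))) = 0 := by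
  have hzero : ∀ t ∈ range (d + 1), t ∉ Finset.Ico j (d + 1) →
      (-1 : ℝ) ^ (d - t) * (d.choose t) * ((t.choose j : ℝ) * ((N - t).choose (ℓ - j))) = 0 := by
    intro t ht hnot
    rw [mem_range] at ht
    rw [Finset.mem_Ico] at hnot
    push_neg at hnot
    rw [Nat.choose_eq_zero_of_lt (by omega : t < j)]
    push_cast; ring
  have hsub : Finset.Ico j (d + 1) ⊆ range (d + 1) := by
    intro x hx; rw [Finset.mem_Ico] at hx; exact mem_range.2 (by omega)
  rw [← Finset.sum_subset hsub hzero, Finset.sum_Ico_eq_sum_range]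
  have hn : d + 1 - j = (d - j) + 1 := by omega
  rw [hn]
  have hcong : ∀ e ∈ range ((d - j) + 1),
      (-1 : ℝ) ^ (d - (j + e)) * (d.choose (j + e)) *
        (((j + e).choose j : ℝ) * ((N - (j + e)).choose (ℓ - j)))
      = (d.choose j : ℝ) * ((-1 : ℝ) ^ ((d - j) - e) * ((d - j).choose e) *
          (((N - j) - e).choose (ℓ - j))) := by
    intro e he
    rw [mem_range] at he
    have h1 : d.choose (j + e) * (j + e).choose j = d.choose j * (d - j).choose e := by
      have := Nat.choose_mul (n := d) (k := j + e) (s := j) (by omega)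
      simpa [Nat.add_sub_cancel_left] using this
    have h1' : ((d.choose (j + e) : ℝ)) * ((j + e).choose j)
        = (d.choose j : ℝ) * ((d - j).choose e) := by exact_mod_cast h1
    have h2 : d - (j + e) = (d - j) - e := by omega
    have h3 : N - (j + e) = (N - j) - e := by omega
    rw [h2, h3]
    calc (-1 : ℝ) ^ ((d - j) - e) * (d.choose (j + e)) *
          (((j + e).choose j : ℝ) * (((N - j) - e).choose (ℓ - j)))
        = (-1 : ℝ) ^ ((d - j) - e) * ((d.choose (j + e) : ℝ) * ((j + e).choose j)) *
            (((N - j) - e).choose (ℓ - j)) := by ring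
      _ = _ := by rw [h1']; ring
  rw [Finset.sum_congr rfl hcong, ← Finset.mul_sum]
  have hrefl : ∑ e ∈ range ((d - j) + 1), (-1 : ℝ) ^ ((d - j) - e) * ((d - j).choose e) *
      (((N - j) - e).choose (ℓ - j))
      = ∑ e ∈ range ((d - j) + 1), (-1 : ℝ) ^ e * ((d - j).choose e) *
          ((e + (N - d)).choose (ℓ - j)) := by
    rw [← Finset.sum_range_reflect (fun e => (-1 : ℝ) ^ e * ((d - j).choose e) *
          ((e + (N - d)).choose (ℓ - j))) ((d - j) + 1)]
    refine Finset.sum_congr rfl fun e he => ?_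
    rw [mem_range] at he
    have h4 : (d - j) + 1 - 1 - e = (d - j) - e := by omega
    rw [h4]
    congr 2
    · congr 1
      rw [Nat.choose_symm (by omega)]
    · congr 1
      omega
  rw [hrefl, altsum_choose_poly (d - j) (N - d) (ℓ - j) (by omega)]
  ring

lemma diff_T_zero (N m ℓ d : ℕ) (hl : ℓ < d) (hd : d ≤ N) :
    ∑ t ∈ range (d + 1), (-1 : ℝ) ^ (d - t) * (d.choose t) * Tcoef (2 * m + N) m ℓ t = 0 := by
  have hT : ∀ t ∈ range (d + 1), (-1 : ℝ) ^ (d - t) * (d.choose t) * Tcoef (2 * m + N) m ℓ t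
      = ∑ j ∈ range (d + 1), (-1 : ℝ) ^ (d - t) * (d.choose t) *
        (if j ≤ ℓ then (-1 : ℝ) ^ (m + j) * ((2 * m + ℓ).choose (m + j)) *
          ((t.choose j : ℝ) * ((N - t).choose (ℓ - j))) else 0) := by
    intro t ht
    rw [mem_range] at ht
    have harg : 2 * m + N - 2 * m - t = N - t := by omega
    have hTt : Tcoef (2 * m + N) m ℓ t = ∑ j ∈ range (d + 1),
        (if j ≤ ℓ then (-1 : ℝ) ^ (m + j) * ((2 * m + ℓ).choose (m + j)) *
          ((t.choose j : ℝ) * ((N - t).choose (ℓ - j))) else 0) := by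
      rw [Tcoef]
      have hsub : range (t + 1) ⊆ range (d + 1) := Finset.range_subset_range.2 (by omega)
      have hz : ∀ j ∈ range (d + 1), j ∉ range (t + 1) →
          (if j ≤ ℓ then (-1 : ℝ) ^ (m + j) * ((2 * m + ℓ).choose (m + j)) *
            ((t.choose j : ℝ) * ((N - t).choose (ℓ - j))) else 0) = 0 := by
        intro j hj hnot
        rw [mem_range] at hnot
        rw [Nat.choose_eq_zero_of_lt (by omega : t < j)]
        split <;> simp
      rw [← Finset.sum_subset hsub hz]
      refine Finset.sum_congr rfl fun j hj => ?_
      rw [harg]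
      split
      · ring
      · rfl
    rw [hTt, Finset.mul_sum]
  rw [Finset.sum_congr rfl hT, Finset.sum_comm]
  rw [Finset.sum_eq_zero]
  intro j hj
  rcases le_or_gt j ℓ with hjl | hjl
  · have : ∀ t ∈ range (d + 1), (-1 : ℝ) ^ (d - t) * (d.choose t) *
        (if j ≤ ℓ then (-1 : ℝ) ^ (m + j) * ((2 * m + ℓ).choose (m + j)) *
          ((t.choose j : ℝ) * ((N - t).choose (ℓ - j))) else 0)
        = ((-1 : ℝ) ^ (m + j) * ((2 * m + ℓ).choose (m + j))) *
          ((-1 : ℝ) ^ (d - t) * (d.choose t) * ((t.choose j : ℝ) * ((N - t).choose (ℓ - j)))) := by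
      intro t ht
      rw [if_pos hjl]
      ring
    rw [Finset.sum_congr rfl this, ← Finset.mul_sum, inner_alt_zero N d ℓ j hjl hl hd]
    ring
  · rw [Finset.sum_eq_zero]
    intro t ht
    rw [if_neg (by omega)]
    ring

lemma CC_zero (N m ℓ d v : ℕ) (hd : d < ℓ) (hl : ℓ ≤ N) (hv : v ≤ d) :
    ∑ k ∈ range (N + 1), (-1 : ℝ) ^ k * ((m + ℓ).choose (m + k)) *
      ((k + (m + (d - v))).choose (m + d)) = 0 := by
  have hfull := altsum_choose_poly (m + ℓ) (d - v) (m + d) (by omega)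
  -- restrict the full sum to k' ∈ [m, m+ℓ]
  have hzero : ∀ x ∈ range (m + ℓ + 1), x ∉ Finset.Ico m (m + ℓ + 1) →
      (-1 : ℝ) ^ x * ((m + ℓ).choose x) * ((x + (d - v)).choose (m + d)) = 0 := by
    intro x hx hnot
    rw [Finset.mem_Ico] at hnot
    rw [mem_range] at hx
    push_neg at hnot
    rw [Nat.choose_eq_zero_of_lt (by omega : x + (d - v) < m + d)]
    ring
  have hsub : Finset.Ico m (m + ℓ + 1) ⊆ range (m + ℓ + 1) := by
    intro x hx; rw [Finset.mem_Ico] at hx; exact mem_range.2 (by omega)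
  rw [← Finset.sum_subset hsub hzero, Finset.sum_Ico_eq_sum_range] at hfull
  rw [show m + ℓ + 1 - m = ℓ + 1 from by omega] at hfull
  have hcong : ∀ k ∈ range (ℓ + 1),
      (-1 : ℝ) ^ (m + k) * ((m + ℓ).choose (m + k)) * ((m + k + (d - v)).choose (m + d))
      = (-1 : ℝ) ^ m * ((-1 : ℝ) ^ k * ((m + ℓ).choose (m + k)) *
          ((k + (m + (d - v))).choose (m + d))) := by
    intro k _
    rw [show m + k + (d - v) = k + (m + (d - v)) from by omega, pow_add]
    ring
  rw [Finset.sum_congr rfl hcong, ← Finset.mul_sum] at hfull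
  have hm : ((-1 : ℝ) ^ m) ≠ 0 := by positivity
  have hshort : ∑ k ∈ range (ℓ + 1), (-1 : ℝ) ^ k * ((m + ℓ).choose (m + k)) *
      ((k + (m + (d - v))).choose (m + d)) = 0 := by
    rcases mul_eq_zero.1 hfull with h | h
    · exact absurd h hm
    · exact h
  rw [← Finset.sum_subset (Finset.range_subset_range.2 (by omega : ℓ + 1 ≤ N + 1)) ?_]
  · exact hshort
  · intro k hk hnot
    rw [mem_range] at hnot
    rw [Nat.choose_eq_zero_of_lt (by omega : m + ℓ < m + k)]
    ring

/-- Closed form of the weighted sum over i, for each k ≤ ℓ. -/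
lemma Jeval (N m ℓ d k : ℕ) (hk : k ≤ ℓ) (hl : ℓ ≤ N) :
    ∑ i ∈ range (N + 1), i.choose d * i.choose k * (N - i).choose (ℓ - k) *
        (m + i).choose m * (m + N - i).choose m
      = ∑ t ∈ range (k + 1), d.choose (k - t) * (d + t).choose d *
          (m + (d + t)).choose m * (m + (ℓ - k)).choose m *
          (2 * m + N + 1).choose ((m + (d + t)) + (m + (ℓ - k)) + 1) := by
  have hstep : ∀ i ∈ range (N + 1),
      i.choose d * i.choose k * (N - i).choose (ℓ - k) * (m + i).choose m * (m + N - i).choose m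
      = ∑ t ∈ range (k + 1), (d.choose (k - t) * (d + t).choose d *
          (m + (d + t)).choose m * (m + (ℓ - k)).choose m) *
          ((m + i).choose (m + (d + t)) * (m + N - i).choose (m + (ℓ - k))) := by
    intro i hi
    rw [mem_range] at hi
    rw [choose_mul_choose_expand i d k, Finset.sum_mul, Finset.sum_mul, Finset.sum_mul]
    refine Finset.sum_congr rfl fun t _ => ?_
    have e1 : i.choose (d + t) * (m + i).choose m
        = (m + i).choose (m + (d + t)) * (m + (d + t)).choose m := chooseA m i (d + t)
    have e2 : (N - i).choose (ℓ - k) * (m + (N - i)).choose m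
        = (m + (N - i)).choose (m + (ℓ - k)) * (m + (ℓ - k)).choose m := chooseA m (N - i) (ℓ - k)
    have e3 : m + (N - i) = m + N - i := by omega
    rw [e3] at e2
    calc d.choose (k - t) * ((d + t).choose d * i.choose (d + t)) * (N - i).choose (ℓ - k) *
          (m + i).choose m * (m + N - i).choose m
        = d.choose (k - t) * (d + t).choose d * (i.choose (d + t) * (m + i).choose m) *
            ((N - i).choose (ℓ - k) * (m + N - i).choose m) := by ring
      _ = _ := by rw [e1, e2]; ring
  rw [Finset.sum_congr rfl hstep, Finset.sum_comm]
  refine Finset.sum_congr rfl fun t _ => ?_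
  rw [← Finset.mul_sum, sum_choose_vandermonde m N (m + (d + t)) (m + (ℓ - k))
    (by omega) (by omega)]

/-- The reflected/padded form of the `Jeval` right-hand side. -/
def hfun (N m ℓ d k v : ℕ) : ℕ :=
  d.choose v * (d + k - v).choose d * (m + (d + k - v)).choose m *
    (m + (ℓ - k)).choose m * (2 * m + N + 1).choose (2 * m + d + (ℓ - v) + 1)

lemma hfun_eq_zero_of_gt (N m ℓ d k v : ℕ) (hv : k < v) : hfun N m ℓ d k v = 0 := by
  unfold hfun
  rcases le_or_gt v d with h | h
  · rw [Nat.choose_eq_zero_of_lt (by omega : d + k - v < d)]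
    ring
  · rw [Nat.choose_eq_zero_of_lt (by omega : d < v)]
    ring

lemma reindex_g (N m ℓ d k : ℕ) (hk : k ≤ ℓ) (hl : ℓ ≤ N) :
    ∑ t ∈ range (k + 1), d.choose (k - t) * (d + t).choose d *
        (m + (d + t)).choose m * (m + (ℓ - k)).choose m *
        (2 * m + N + 1).choose ((m + (d + t)) + (m + (ℓ - k)) + 1)
      = ∑ v ∈ range (N + 1), hfun N m ℓ d k v := by
  have hrefl : ∑ t ∈ range (k + 1), d.choose (k - t) * (d + t).choose d *
        (m + (d + t)).choose m * (m + (ℓ - k)).choose m *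
        (2 * m + N + 1).choose ((m + (d + t)) + (m + (ℓ - k)) + 1)
      = ∑ v ∈ range (k + 1), hfun N m ℓ d k v := by
    rw [← Finset.sum_range_reflect (fun v => hfun N m ℓ d k v) (k + 1)]
    refine Finset.sum_congr rfl fun t ht => ?_
    rw [mem_range] at ht
    unfold hfun
    have e0 : k + 1 - 1 - t = k - t := by omega
    have e2 : d + k - (k - t) = d + t := by omega
    have e3 : 2 * m + d + (ℓ - (k - t)) + 1 = (m + (d + t)) + (m + (ℓ - k)) + 1 := by omega
    rw [e0, e2, e3]
  rw [hrefl]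
  exact Finset.sum_subset (Finset.range_subset_range.2 (by omega))
    (fun v _ hv => hfun_eq_zero_of_gt N m ℓ d k v (by rw [mem_range] at hv; omega))

lemma inner_k_zero (N m ℓ d v : ℕ) (hl : ℓ ≤ N) (hd : d < ℓ) (hv : v ≤ d) :
    ∑ k ∈ range (N + 1), (if k ≤ ℓ then
        (-1 : ℝ) ^ (m + k) * ((2 * m + ℓ).choose (m + k)) * (hfun N m ℓ d k v : ℝ)
      else 0) = 0 := by
  have hcong : ∀ k ∈ range (N + 1), (if k ≤ ℓ then
        (-1 : ℝ) ^ (m + k) * ((2 * m + ℓ).choose (m + k)) * (hfun N m ℓ d k v : ℝ)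
      else 0)
      = ((-1 : ℝ) ^ m * ((2 * m + ℓ).choose m) * ((m + d).choose m) * (d.choose v) *
          ((2 * m + N + 1).choose (2 * m + d + (ℓ - v) + 1))) *
        ((-1 : ℝ) ^ k * ((m + ℓ).choose (m + k)) * ((k + (m + (d - v))).choose (m + d))) := by
    intro k _
    rcases le_or_gt k ℓ with hkl | hkl
    · rw [if_pos hkl]
      have eqP : (2 * m + ℓ).choose (m + k) * hfun N m ℓ d k v
          = (2 * m + ℓ).choose m * (m + ℓ).choose (m + k) * (m + d).choose m * d.choose v *
            (2 * m + N + 1).choose (2 * m + d + (ℓ - v) + 1) *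
            ((k + (m + (d - v))).choose (m + d)) := by
        unfold hfun
        have eA : (d + k - v).choose d * (m + (d + k - v)).choose m
            = (m + ((d - v) + k)).choose (m + d) * (m + d).choose m := by
          rw [show d + k - v = (d - v) + k from by omega]
          exact chooseA m ((d - v) + k) d
        have eB : (2 * m + ℓ).choose (m + k) * (m + (ℓ - k)).choose m
            = (2 * m + ℓ).choose m * (m + ℓ).choose (m + k) := by
          rw [show m + (ℓ - k) = m + ℓ - k from by omega]
          exact chooseB m ℓ k hkl
        calc (2 * m + ℓ).choose (m + k) *
              (d.choose v * (d + k - v).choose d * (m + (d + k - v)).choose m *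
                (m + (ℓ - k)).choose m * (2 * m + N + 1).choose (2 * m + d + (ℓ - v) + 1))
            = ((2 * m + ℓ).choose (m + k) * (m + (ℓ - k)).choose m) *
                ((d + k - v).choose d * (m + (d + k - v)).choose m) * d.choose v *
                (2 * m + N + 1).choose (2 * m + d + (ℓ - v) + 1) := by ring
          _ = _ := by
              rw [eA, eB, show m + ((d - v) + k) = k + (m + (d - v)) from by omega]
              ring
      have eqP' : ((2 * m + ℓ).choose (m + k) : ℝ) * (hfun N m ℓ d k v : ℝ)
          = ((2 * m + ℓ).choose m : ℝ) * ((m + ℓ).choose (m + k)) * ((m + d).choose m) *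
            (d.choose v) * ((2 * m + N + 1).choose (2 * m + d + (ℓ - v) + 1)) *
            ((k + (m + (d - v))).choose (m + d)) := by exact_mod_cast eqP
      rw [pow_add]
      calc (-1 : ℝ) ^ m * (-1 : ℝ) ^ k * ((2 * m + ℓ).choose (m + k)) * (hfun N m ℓ d k v : ℝ)
          = (-1 : ℝ) ^ m * (-1 : ℝ) ^ k *
              (((2 * m + ℓ).choose (m + k) : ℝ) * (hfun N m ℓ d k v : ℝ)) := by ring
        _ = _ := by rw [eqP']; ring
    · rw [if_neg (by omega)]
      rw [Nat.choose_eq_zero_of_lt (by omega : m + ℓ < m + k)]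
      push_cast
      ring
  rw [Finset.sum_congr rfl hcong, ← Finset.mul_sum, CC_zero N m ℓ d v hd hl hv]
  ring

lemma hfun_eq_zero_of_dlt (N m ℓ d k v : ℕ) (hv : d < v) : hfun N m ℓ d k v = 0 := by
  unfold hfun
  rw [Nat.choose_eq_zero_of_lt hv]
  ring

lemma moment_zero (N m ℓ d : ℕ) (hl : ℓ ≤ N) (hd : d < ℓ) :
    ∑ i ∈ range (N + 1), (i.choose d : ℝ) * Tcoef (2 * m + N) m ℓ i *
        ((m + i).choose m) * ((m + N - i).choose m) = 0 := by
  have step1 : ∀ i ∈ range (N + 1), (i.choose d : ℝ) * Tcoef (2 * m + N) m ℓ i *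
        ((m + i).choose m) * ((m + N - i).choose m)
      = ∑ k ∈ range (N + 1), (if k ≤ ℓ then
          (-1 : ℝ) ^ (m + k) * ((2 * m + ℓ).choose (m + k)) *
            ((i.choose d * i.choose k * (N - i).choose (ℓ - k) *
              (m + i).choose m * (m + N - i).choose m : ℕ) : ℝ) else 0) := by
    intro i hi
    rw [mem_range] at hi
    have hTt : Tcoef (2 * m + N) m ℓ i = ∑ k ∈ range (N + 1),
        (if k ≤ ℓ then (-1 : ℝ) ^ (m + k) * ((2 * m + ℓ).choose (m + k)) *
          (i.choose k) * ((N - i).choose (ℓ - k)) else 0) := by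
      rw [Tcoef]
      have hsub : range (i + 1) ⊆ range (N + 1) := Finset.range_subset_range.2 (by omega)
      have hz : ∀ k ∈ range (N + 1), k ∉ range (i + 1) →
          (if k ≤ ℓ then (-1 : ℝ) ^ (m + k) * ((2 * m + ℓ).choose (m + k)) *
            (i.choose k) * ((N - i).choose (ℓ - k)) else 0) = 0 := by
        intro k _ hnot
        rw [mem_range] at hnot
        rw [Nat.choose_eq_zero_of_lt (by omega : i < k)]
        split <;> simp
      rw [← Finset.sum_subset hsub hz]
      refine Finset.sum_congr rfl fun k _ => ?_
      rw [show 2 * m + N - 2 * m - i = N - i from by omega]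
    rw [hTt, Finset.mul_sum, Finset.sum_mul, Finset.sum_mul]
    refine Finset.sum_congr rfl fun k _ => ?_
    rcases le_or_gt k ℓ with hkl | hkl
    · rw [if_pos hkl, if_pos hkl]
      push_cast
      ring
    · rw [if_neg (by omega), if_neg (by omega)]
      ring
  rw [Finset.sum_congr rfl step1, Finset.sum_comm]
  have step2 : ∀ k ∈ range (N + 1),
      (∑ i ∈ range (N + 1), (if k ≤ ℓ then
          (-1 : ℝ) ^ (m + k) * ((2 * m + ℓ).choose (m + k)) *
            ((i.choose d * i.choose k * (N - i).choose (ℓ - k) *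
              (m + i).choose m * (m + N - i).choose m : ℕ) : ℝ) else 0))
      = ∑ v ∈ range (N + 1), (if k ≤ ℓ then
          (-1 : ℝ) ^ (m + k) * ((2 * m + ℓ).choose (m + k)) * (hfun N m ℓ d k v : ℝ) else 0) := by
    intro k _
    rcases le_or_gt k ℓ with hkl | hkl
    · simp only [if_pos hkl]
      rw [← Finset.mul_sum, ← Finset.mul_sum, ← Nat.cast_sum, ← Nat.cast_sum,
        Jeval N m ℓ d k hkl hl, reindex_g N m ℓ d k hkl hl]
    · simp only [if_neg (by omega : ¬ k ≤ ℓ)]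
  rw [Finset.sum_congr rfl step2, Finset.sum_comm]
  rw [Finset.sum_eq_zero]
  intro v _
  rcases le_or_gt v d with hv | hv
  · exact inner_k_zero N m ℓ d v hl hd hv
  · rw [Finset.sum_eq_zero]
    intro k _
    rw [hfun_eq_zero_of_dlt N m ℓ d k v hv]
    split <;> simp

lemma weight_eq (N m i : ℕ) (hi : i ≤ N) :
    ((N.choose i : ℝ)) / (((2 * m + N).choose (m + i) : ℝ))
      = ((m + i).choose m : ℝ) * ((m + N - i).choose m) *
        ((N.factorial : ℝ) * m.factorial * m.factorial / ((2 * m + N).factorial : ℝ)) := by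
  have cm1 : (m + i).choose m * m.factorial * i.factorial = (m + i).factorial := by
    have := Nat.choose_mul_factorial_mul_factorial (show m ≤ m + i by omega)
    rwa [Nat.add_sub_cancel_left] at this
  have cm2 : (m + N - i).choose m * m.factorial * (N - i).factorial = (m + N - i).factorial := by
    have := Nat.choose_mul_factorial_mul_factorial (show m ≤ m + N - i by omega)
    rwa [show m + N - i - m = N - i from by omega] at this
  have cbig : (2 * m + N).choose (m + i) * (m + i).factorial * (m + N - i).factorial
      = (2 * m + N).factorial := by
    have := Nat.choose_mul_factorial_mul_factorial (show m + i ≤ 2 * m + N by omega)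
    rwa [show 2 * m + N - (m + i) = m + N - i from by omega] at this
  have cN : N.choose i * i.factorial * (N - i).factorial = N.factorial :=
    Nat.choose_mul_factorial_mul_factorial hi
  have hnat : N.choose i * (2 * m + N).factorial * (i.factorial * (N - i).factorial)
      = (m + i).choose m * ((m + N - i).choose m) *
          (N.factorial * m.factorial * m.factorial) * ((2 * m + N).choose (m + i)) *
          (i.factorial * (N - i).factorial) := by
    calc N.choose i * (2 * m + N).factorial * (i.factorial * (N - i).factorial)
        = (N.choose i * i.factorial * (N - i).factorial) * (2 * m + N).factorial := by ring
      _ = N.factorial * (2 * m + N).factorial := by rw [cN]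
      _ = ((2 * m + N).choose (m + i) * ((m + i).choose m * m.factorial * i.factorial) *
            ((m + N - i).choose m * m.factorial * (N - i).factorial)) * N.factorial := by
          rw [cm1, cm2, cbig]; ring
      _ = _ := by ring
  have hnat2 : N.choose i * (2 * m + N).factorial
      = (m + i).choose m * ((m + N - i).choose m) *
          (N.factorial * m.factorial * m.factorial) * ((2 * m + N).choose (m + i)) :=
    Nat.eq_of_mul_eq_mul_right (by positivity) hnat
  have hcast := congrArg (Nat.cast : ℕ → ℝ) hnat2
  push_cast at hcast
  have hC : (((2 * m + N).choose (m + i) : ℕ) : ℝ) ≠ 0 := by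
    exact_mod_cast (Nat.choose_pos (show m + i ≤ 2 * m + N by omega)).ne'
  have hF : (((2 * m + N).factorial : ℕ) : ℝ) ≠ 0 := by
    exact_mod_cast (Nat.factorial_pos (2 * m + N)).ne'
  field_simp
  linear_combination hcast

lemma ortho_lt (N m ℓ₁ ℓ₂ : ℕ) (h12 : ℓ₁ < ℓ₂) (h2 : ℓ₂ ≤ N) :
    ∑ i ∈ range (N + 1), Tcoef (2 * m + N) m ℓ₁ i * Tcoef (2 * m + N) m ℓ₂ i *
      ((N.choose i : ℝ) / ((2 * m + N).choose (m + i))) = 0 := by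
  set K : ℝ := (N.factorial : ℝ) * m.factorial * m.factorial / ((2 * m + N).factorial : ℝ)
  set a : ℕ → ℝ := fun d =>
    ∑ t ∈ range (d + 1), (-1 : ℝ) ^ (d - t) * (d.choose t) * Tcoef (2 * m + N) m ℓ₁ t with ha
  have step1 : ∀ i ∈ range (N + 1),
      Tcoef (2 * m + N) m ℓ₁ i * Tcoef (2 * m + N) m ℓ₂ i *
        ((N.choose i : ℝ) / ((2 * m + N).choose (m + i)))
      = ∑ d ∈ range (N + 1), (a d * K) *
          ((i.choose d : ℝ) * Tcoef (2 * m + N) m ℓ₂ i *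
            ((m + i).choose m) * ((m + N - i).choose m)) := by
    intro i hi
    rw [mem_range] at hi
    rw [weight_eq N m i (by omega)]
    rw [newton_expansion (Tcoef (2 * m + N) m ℓ₁) N i (by omega)]
    rw [Finset.sum_mul, Finset.sum_mul]
    refine Finset.sum_congr rfl fun d _ => ?_
    rw [ha]
    ring
  rw [Finset.sum_congr rfl step1, Finset.sum_comm]
  rw [Finset.sum_eq_zero]
  intro d hd
  rw [mem_range] at hd
  rw [← Finset.mul_sum]
  rcases le_or_gt d ℓ₁ with hdl | hdl
  · rw [moment_zero N m ℓ₂ d (by omega) (by omega)]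
    ring
  · have : a d = 0 := diff_T_zero N m ℓ₁ d hdl (by omega)
    rw [this]
    ring


/-- orthogonality of the Hahn-type sums for ℓ₁ ≠ ℓ₂. -/
theorem Tcoef_orthogonality (n m ℓ₁ ℓ₂ : ℕ) (hm : 2 * m ≤ n)
    (h1 : ℓ₁ ≤ n - 2 * m) (h2 : ℓ₂ ≤ n - 2 * m) (hne : ℓ₁ ≠ ℓ₂) :
    ∑ i ∈ Finset.range (n - 2 * m + 1),
        Tcoef n m ℓ₁ i * Tcoef n m ℓ₂ i * (((n - 2 * m).choose i : ℝ) / (n.choose (m + i))) =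
      0 := by
  obtain ⟨N, rfl⟩ : ∃ N, n = 2 * m + N := ⟨n - 2 * m, by omega⟩
  rw [show 2 * m + N - 2 * m = N from by omega] at h1 h2 ⊢
  rcases lt_or_gt_of_ne hne with h | h
  · exact ortho_lt N m ℓ₁ ℓ₂ h h2
  · have := ortho_lt N m ℓ₂ ℓ₁ h h1
    rw [← this]
    exact Finset.sum_congr rfl fun i _ => by ring
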